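/- [Monotonicity of the Q-update] Let U ∈ 𝒫 and Q ∈ 𝕆, and set Z̄ := ΦᵀUUᵀΦ. If Q' ∈ 𝕆 satisfies ⟨Z̄Q, Y⟩ ≤ ⟨Z̄Q, Q'⟩ for all Y ∈ 𝕆, then ⟨UᵀΦQ', UᵀΦQ'⟩ ≥ ⟨UᵀΦQ, UᵀΦQ⟩; that is, the objective value cannot decrease through the Q-update: f(U,Q') ≥ f(U,Q). -/
import Mathlib


open Matrix BigOperators Filter

noncomputable section

/-- Frobenius inner product of two real matrices of the same size. -/
def frob {α β : Type*} [Fintype α] [Fintype β] (A B : Matrix α β ℝ) : ℝ :=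
  ∑ u, ∑ v, A u v * B u v

/-- The set 𝒫: blockwise partial permutation matrices. Rows indexed by pairs (i,r),
1 ≤ i ≤ k, 1 ≤ r ≤ m i; columns by Fin d. Entries in {0,1}, exactly one 1 per row,
each block column sum at most 1. -/
def isP {k : ℕ} (d : ℕ) (m : Fin k → ℕ)
    (U : Matrix (Σ i : Fin k, Fin (m i)) (Fin d) ℝ) : Prop :=
  (∀ u v, U u v = 0 ∨ U u v = 1) ∧
  (∀ u, ∃! v, U u v = 1) ∧
  (∀ (i : Fin k) (c : Fin d), ∑ r : Fin (m i), U ⟨i, r⟩ c ≤ 1)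

/-- The set 𝕆: block-orthogonal matrices; each b×b block is orthogonal. -/
def isO (k b : ℕ) (Q : Matrix (Fin k × Fin b) (Fin b) ℝ) : Prop :=
  ∀ i : Fin k,
    (Matrix.of fun s t => Q (i, s) t) * (Matrix.of fun s t => Q (i, s) t)ᵀ =
      (1 : Matrix (Fin b) (Fin b) ℝ)

/-- Φ is block-diagonal: entries with mismatched block indices vanish. -/
def isBlockDiag {k : ℕ} (m : Fin k → ℕ) (b : ℕ)
    (Φ : Matrix (Σ i : Fin k, Fin (m i)) (Fin k × Fin b) ℝ) : Prop :=
  ∀ (i : Fin k) (r : Fin (m i)) (j : Fin k) (s : Fin b), i ≠ j → Φ ⟨i, r⟩ (j, s) = 0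

/-- The objective f(U,Q) = ⟨UᵀΦQ, UᵀΦQ⟩. -/
def obj {k b d : ℕ} (m : Fin k → ℕ)
    (Φ : Matrix (Σ i : Fin k, Fin (m i)) (Fin k × Fin b) ℝ)
    (U : Matrix (Σ i : Fin k, Fin (m i)) (Fin d) ℝ)
    (Q : Matrix (Fin k × Fin b) (Fin b) ℝ) : ℝ :=
  frob (Uᵀ * Φ * Q) (Uᵀ * Φ * Q)

lemma frob_eq_trace {α β : Type*} [Fintype α] [Fintype β] (A B : Matrix α β ℝ) :
    frob A B = (Aᵀ * B).trace := by
  simp only [frob, Matrix.trace, Matrix.diag, Matrix.mul_apply, Matrix.transpose_apply]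
  exact Finset.sum_comm

lemma frob_self_nonneg {α β : Type*} [Fintype α] [Fintype β] (A : Matrix α β ℝ) :
    0 ≤ frob A A := by
  apply Finset.sum_nonneg; intro u _; apply Finset.sum_nonneg; intro v _
  exact mul_self_nonneg _

lemma frob_sub_left {α β : Type*} [Fintype α] [Fintype β] (A B C : Matrix α β ℝ) :
    frob (A - B) C = frob A C - frob B C := by
  simp [frob, sub_mul, Finset.sum_sub_distrib]

lemma frob_sub_right {α β : Type*} [Fintype α] [Fintype β] (A B C : Matrix α β ℝ) :
    frob A (B - C) = frob A B - frob A C := by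
  simp [frob, mul_sub, Finset.sum_sub_distrib]

lemma frob_sym_swap {γ : Type*} [Fintype γ] (Z : Matrix γ γ ℝ) (hZ : Zᵀ = Z)
    {β : Type*} [Fintype β] (A B : Matrix γ β ℝ) :
    frob (Z * A) B = frob (Z * B) A := by
  rw [frob_eq_trace, frob_eq_trace, Matrix.transpose_mul, hZ]
  rw [show Aᵀ * Z * B = Aᵀ * (Z * B) from Matrix.mul_assoc _ _ _]
  rw [Matrix.trace_mul_comm, ← Matrix.trace_transpose, Matrix.transpose_mul, Matrix.transpose_mul,
    Matrix.transpose_transpose, hZ, Matrix.mul_assoc, Matrix.trace_mul_comm, Matrix.mul_assoc]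

theorem monotonicity_Q_update (k b d : ℕ) (hk : 0 < k) (hb : 0 < b) (hd : 0 < d)
    (m : Fin k → ℕ) (hm : ∀ i, 0 < m i)
    (Φ : Matrix (Σ i : Fin k, Fin (m i)) (Fin k × Fin b) ℝ) (hΦ : isBlockDiag m b Φ)
    (U : Matrix (Σ i : Fin k, Fin (m i)) (Fin d) ℝ)
    (Q Q' : Matrix (Fin k × Fin b) (Fin b) ℝ)
    (hU : isP d m U) (hQ : isO k b Q) (hQ' : isO k b Q')
    (hproj : ∀ Y, isO k b Y →
      frob (Φᵀ * U * Uᵀ * Φ * Q) Y ≤ frob (Φᵀ * U * Uᵀ * Φ * Q) Q') :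
    obj m Φ U Q' ≥ obj m Φ U Q := by
  set Z : Matrix (Fin k × Fin b) (Fin k × Fin b) ℝ := Φᵀ * U * Uᵀ * Φ with hZdef
  have hZsym : Zᵀ = Z := by
    simp [hZdef, Matrix.transpose_mul, Matrix.mul_assoc]
  -- obj equals frob (Z * X) X
  have hobj : ∀ X : Matrix (Fin k × Fin b) (Fin b) ℝ,
      obj m Φ U X = frob (Z * X) X := by
    intro X
    rw [obj, frob_eq_trace, frob_eq_trace]
    congr 1
    simp [hZdef, Matrix.transpose_mul, Matrix.mul_assoc]
  -- PSD: frob (Z * X) X ≥ 0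
  have hpsd : ∀ X : Matrix (Fin k × Fin b) (Fin b) ℝ, 0 ≤ frob (Z * X) X := by
    intro X
    rw [← hobj X, obj]
    exact frob_self_nonneg _
  have key : 0 ≤ frob (Z * (Q' - Q)) (Q' - Q) := hpsd _
  have hexp : frob (Z * (Q' - Q)) (Q' - Q)
      = frob (Z * Q') Q' - 2 * frob (Z * Q) Q' + frob (Z * Q) Q := by
    rw [Matrix.mul_sub, frob_sub_left, frob_sub_right, frob_sub_right,
      frob_sym_swap Z hZsym Q' Q]
    ring
  have hQQ' : frob (Z * Q) Q ≤ frob (Z * Q) Q' := by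
    have := hproj Q hQ
    simpa [hZdef] using this
  have h1 : frob (Z * Q') Q' ≥ 2 * frob (Z * Q) Q' - frob (Z * Q) Q := by
    nlinarith [key, hexp]
  rw [hobj Q, hobj Q']
  linarith
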